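/- arXiv:2604.18840 — 2 statements merged into one kernel-verified Lean document; each statement's English description precedes it below -/
import Mathlib

section
/- Fix α > 0. For every x > 0, the function x ↦ F_X(x; α) is differentiable at x with derivative f_X(x; α) = ∫₀^∞ r^α f_R(r)/(x + r^α)² dr; that is, differentiation under the integral sign in the defining formula of F_X is valid and its derivative is given by the stated integral. -/
open MeasureTheory ProbabilityTheory Real Set Filter

/-- The standard normal distribution function. -/
noncomputable def Phi (z : ℝ) : ℝ :=
  ∫ t in Set.Iic z, (Real.sqrt (2 * Real.pi))⁻¹ * Real.exp (-(t ^ 2) / 2)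

/-- The transformation `g(z) = (1 - Φ(z))⁻¹ - 1`. -/
noncomputable def g (z : ℝ) : ℝ := (1 - Phi z)⁻¹ - 1

/-- The Lévy(0, 1/2) density. -/
noncomputable def fR (r : ℝ) : ℝ :=
  if 0 < r then (Real.sqrt (4 * Real.pi * r ^ 3))⁻¹ * Real.exp (-(1 / (4 * r))) else 0

/-- The marginal distribution function of the LRSM process. -/
noncomputable def FX (x α : ℝ) : ℝ :=
  1 - ∫ r in Set.Ioi (0:ℝ), fR r / (1 + x * r ^ (-α))

/-- The marginal density of the LRSM process. -/
noncomputable def fX (x α : ℝ) : ℝ :=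
  ∫ r in Set.Ioi (0:ℝ), r ^ α * fR r / (x + r ^ α) ^ 2


lemma fR_nonneg (r : ℝ) : 0 ≤ fR r := by
  unfold fR; split
  · positivity
  · exact le_rfl

lemma fR_meas : Measurable fR := by
  unfold fR
  refine Measurable.ite (measurableSet_lt measurable_const measurable_id) ?_ measurable_const
  exact ((Real.continuous_sqrt.measurable.comp
      (measurable_const.mul (measurable_id.pow_const 3))).inv).mul
    (Real.measurable_exp.comp (measurable_const.div (measurable_const.mul measurable_id)).neg)

-- exp x ≥ x^2/4 for x ≥ 0
lemma sq_div_four_le_exp {x : ℝ} (hx : 0 ≤ x) : x ^ 2 / 4 ≤ Real.exp x := by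
  have h1 : x / 2 + 1 ≤ Real.exp (x / 2) := Real.add_one_le_exp _
  have h2 : Real.exp (x / 2) ^ 2 = Real.exp x := by
    rw [sq, ← Real.exp_add]; ring_nf
  nlinarith [Real.exp_pos (x / 2)]

lemma fR_le_on_Ioc {r : ℝ} (h0 : 0 < r) (h1 : r ≤ 1) : fR r ≤ 32 := by
  rw [fR, if_pos h0]
  have hexp : Real.exp (-(1 / (4 * r))) ≤ 64 * r ^ 2 := by
    have h := sq_div_four_le_exp (x := 1 / (4 * r)) (by positivity)
    rw [Real.exp_neg]
    rw [inv_le_comm₀ (Real.exp_pos _) (by positivity)]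
    calc (64 * r ^ 2)⁻¹ = (1 / (4 * r)) ^ 2 / 4 := by field_simp; ring
    _ ≤ Real.exp (1 / (4 * r)) := h
  have hsqrt : 2 * r ^ 2 ≤ Real.sqrt (4 * Real.pi * r ^ 3) := by
    have : Real.sqrt (4 * r ^ 4) ≤ Real.sqrt (4 * Real.pi * r ^ 3) := by
      apply Real.sqrt_le_sqrt
      nlinarith [Real.pi_gt_three, pow_le_pow_left₀ h0.le h1 4, pow_pos h0 3, pow_pos h0 4]
    calc 2 * r ^ 2 = Real.sqrt (4 * r ^ 4) := by
          rw [show 4 * r ^ 4 = (2 * r ^ 2) ^ 2 by ring, Real.sqrt_sq (by positivity)]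
    _ ≤ _ := this
  have hpos : (0:ℝ) < 2 * r ^ 2 := by positivity
  calc (Real.sqrt (4 * Real.pi * r ^ 3))⁻¹ * Real.exp (-(1 / (4 * r)))
      ≤ (2 * r ^ 2)⁻¹ * (64 * r ^ 2) := by
        apply mul_le_mul _ hexp (Real.exp_nonneg _) (by positivity)
        exact inv_anti₀ hpos hsqrt
  _ = 32 := by field_simp; ring

lemma fR_le_on_Ioi {r : ℝ} (h1 : 1 < r) : fR r ≤ r ^ (-(3:ℝ)/2) := by
  have h0 : (0:ℝ) < r := lt_trans one_pos h1
  rw [fR, if_pos h0]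
  have hs : Real.sqrt (r ^ 3) = r ^ ((3:ℝ)/2) := by
    rw [Real.sqrt_eq_rpow, ← Real.rpow_natCast r 3, ← Real.rpow_mul h0.le]
    norm_num
  have hmono : Real.sqrt (r ^ 3) ≤ Real.sqrt (4 * Real.pi * r ^ 3) := by
    apply Real.sqrt_le_sqrt
    nlinarith [Real.pi_gt_three, pow_pos h0 3]
  have hrp : (0:ℝ) < r ^ ((3:ℝ)/2) := Real.rpow_pos_of_pos h0 _
  calc (Real.sqrt (4 * Real.pi * r ^ 3))⁻¹ * Real.exp (-(1 / (4 * r)))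
      ≤ (r ^ ((3:ℝ)/2))⁻¹ * 1 := by
        apply mul_le_mul _ (Real.exp_le_one_iff.2 (neg_nonpos.mpr (by positivity))) (Real.exp_nonneg _)
          (by positivity)
        rw [← hs]
        exact inv_anti₀ (hs ▸ hrp) hmono
  _ = r ^ (-(3:ℝ)/2) := by
        rw [mul_one, ← Real.rpow_neg h0.le]; norm_num

lemma fR_integrable : IntegrableOn fR (Set.Ioi (0:ℝ)) := by
  have h1 : IntegrableOn fR (Set.Ioc (0:ℝ) 1) := by
    apply Integrable.mono' (g := fun _ => (32:ℝ))
    · exact integrableOn_const measure_Ioc_lt_top.ne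
    · exact fR_meas.aestronglyMeasurable
    · filter_upwards [ae_restrict_mem measurableSet_Ioc] with r hr
      rw [Real.norm_eq_abs, abs_of_nonneg (fR_nonneg r)]
      exact fR_le_on_Ioc hr.1 hr.2
  have h2 : IntegrableOn fR (Set.Ioi (1:ℝ)) := by
    apply Integrable.mono' (g := fun r => r ^ (-(3:ℝ)/2))
    · exact integrableOn_Ioi_rpow_of_lt (by norm_num) one_pos
    · exact fR_meas.aestronglyMeasurable
    · filter_upwards [ae_restrict_mem measurableSet_Ioi] with r hr
      rw [Real.norm_eq_abs, abs_of_nonneg (fR_nonneg r)]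
      exact fR_le_on_Ioi hr
  have := h1.union h2
  rwa [Set.Ioc_union_Ioi_eq_Ioi zero_le_one] at this

/-- For `α > 0` and every `x > 0`, the function `x ↦ F_X(x; α)` is
differentiable at `x` with derivative `f_X(x; α) = ∫₀^∞ r^α fR(r)/(x + r^α)² dr`. -/
theorem FX_hasDerivAt_fX (α : ℝ) (hα : 0 < α) :
    ∀ x : ℝ, 0 < x →
      HasDerivAt (fun y => FX y α)
        (∫ r in Set.Ioi (0:ℝ), r ^ α * fR r / (x + r ^ α) ^ 2) x ∧
      HasDerivAt (fun y => FX y α) (fX x α) x := by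
  intro x hx
  set μ := volume.restrict (Set.Ioi (0:ℝ)) with hμ
  set F : ℝ → ℝ → ℝ := fun y r => fR r / (1 + y * r ^ (-α)) with hF
  set F' : ℝ → ℝ → ℝ := fun y r => fR r * (-(r ^ (-α)) / (1 + y * r ^ (-α)) ^ 2) with hF'
  have hmt : Measurable fun r : ℝ => r ^ (-α) :=
    by fun_prop
  have hFm : ∀ y : ℝ, AEStronglyMeasurable (F y) μ := fun y =>
    (fR_meas.div (measurable_const.add (measurable_const.mul hmt))).aestronglyMeasurable
  have hF'm : AEStronglyMeasurable (F' x) μ :=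
    (fR_meas.mul ((hmt.neg).div
      ((measurable_const.add (measurable_const.mul hmt)).pow_const 2))).aestronglyMeasurable
  have key := hasDerivAt_integral_of_dominated_loc_of_deriv_le
    (F := F) (F' := F') (x₀ := x) (bound := fun r => fR r / (2 * x)) (μ := μ)
    (s := Metric.ball x (x / 2)) (Metric.ball_mem_nhds x (half_pos hx))
    (Filter.Eventually.of_forall hFm)
    ?hint hF'm ?hbound ?hbint ?hdiff
  case hint =>
    apply fR_integrable.mono' (hFm x)
    filter_upwards [ae_restrict_mem measurableSet_Ioi] with r hr
    have ht : (0:ℝ) < r ^ (-α) := Real.rpow_pos_of_pos hr _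
    have hd : (1:ℝ) ≤ 1 + x * r ^ (-α) := by nlinarith
    rw [Real.norm_eq_abs, abs_of_nonneg (div_nonneg (fR_nonneg r) (by linarith))]
    exact div_le_self (fR_nonneg r) hd
  case hbound =>
    filter_upwards [ae_restrict_mem measurableSet_Ioi] with r hr y hy
    have ht : (0:ℝ) < r ^ (-α) := Real.rpow_pos_of_pos hr _
    have hy2 : x / 2 < y := by
      have := abs_lt.mp (mem_ball_iff_norm.mp hy)
      linarith [this.1]
    have hd : (0:ℝ) < 1 + y * r ^ (-α) := by nlinarith
    have hfr := fR_nonneg r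
    show ‖fR r * (-(r ^ (-α)) / (1 + y * r ^ (-α)) ^ 2)‖ ≤ fR r / (2 * x)
    rw [Real.norm_eq_abs, abs_mul, abs_of_nonneg hfr, abs_div, abs_neg,
      abs_of_nonneg ht.le, abs_of_nonneg (sq_nonneg _), ← mul_div_assoc,
      div_le_div_iff₀ (by positivity) (by positivity)]
    nlinarith [mul_nonneg hfr (sq_nonneg (1 - y * r ^ (-α))),
      mul_nonneg (mul_nonneg hfr ht.le) (by linarith : (0:ℝ) ≤ 4 * y - 2 * x)]
  case hbint => exact fR_integrable.div_const (2 * x)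
  case hdiff =>
    filter_upwards [ae_restrict_mem measurableSet_Ioi] with r hr y hy
    have ht : (0:ℝ) < r ^ (-α) := Real.rpow_pos_of_pos hr _
    have hy2 : x / 2 < y := by
      have := abs_lt.mp (mem_ball_iff_norm.mp hy)
      linarith [this.1]
    have hd : (0:ℝ) < 1 + y * r ^ (-α) := by nlinarith
    have h1 : HasDerivAt (fun y : ℝ => 1 + y * r ^ (-α)) (r ^ (-α)) y :=
      (hasDerivAt_mul_const _).const_add 1
    have h2 := (h1.inv hd.ne').const_mul (fR r)
    simpa [hF, hF', div_eq_mul_inv] using h2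
  obtain ⟨-, hderiv⟩ := key
  have hEq : (∫ r, F' x r ∂μ) = -(∫ r in Set.Ioi (0:ℝ), r ^ α * fR r / (x + r ^ α) ^ 2) := by
    rw [← integral_neg]
    apply setIntegral_congr_fun measurableSet_Ioi
    intro r hr
    have hr0 : (0:ℝ) < r := hr
    have hs : (0:ℝ) < r ^ α := Real.rpow_pos_of_pos hr0 _
    show fR r * (-(r ^ (-α)) / (1 + x * r ^ (-α)) ^ 2) = -(r ^ α * fR r / (x + r ^ α) ^ 2)
    rw [Real.rpow_neg hr0.le]
    field_simp
    ring
  rw [hEq] at hderiv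
  have hfinal : HasDerivAt (fun y => FX y α)
      (∫ r in Set.Ioi (0:ℝ), r ^ α * fR r / (x + r ^ α) ^ 2) x := by
    have := hderiv.const_sub 1
    rw [neg_neg] at this
    simpa [FX] using this
  exact ⟨hfinal, hfinal⟩
end

section
/- Let Z be a standard normal random variable and let β ∈ (0, 1). Then E[g(Z)^β] = ∫₀^∞ ds/(1 + s^{1/β}) = π β / sin(π β); in particular g(Z)^β is integrable for every β ∈ (0, 1). -/
open MeasureTheory ProbabilityTheory Real Set Filter Topology

noncomputable def phi (t : ℝ) : ℝ := (Real.sqrt (2 * Real.pi))⁻¹ * Real.exp (-(t ^ 2) / 2)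

lemma phi_eq : phi = gaussianPDFReal 0 1 := by
  ext t
  simp [phi, gaussianPDFReal]

lemma phi_pos (t : ℝ) : 0 < phi t := by
  have h : 0 < Real.sqrt (2 * Real.pi) := Real.sqrt_pos.2 (by positivity)
  unfold phi
  positivity

lemma integrable_phi : Integrable phi := phi_eq ▸ integrable_gaussianPDFReal 0 1

lemma integral_phi : ∫ t, phi t = 1 := by
  rw [phi_eq]; exact integral_gaussianPDFReal_eq_one 0 one_ne_zero

lemma Phi_eq (z : ℝ) : Phi z = ∫ t in Set.Iic z, phi t := rfl

lemma Phi_sub_Phi {a b : ℝ} : Phi b - Phi a = ∫ t in a..b, phi t := by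
  rw [Phi_eq, Phi_eq]
  exact intervalIntegral.integral_Iic_sub_Iic integrable_phi.integrableOn integrable_phi.integrableOn

lemma Phi_strictMono : StrictMono Phi := by
  intro a b hab
  have h : 0 < ∫ t in a..b, phi t :=
    intervalIntegral.intervalIntegral_pos_of_pos (integrable_phi.intervalIntegrable)
      phi_pos hab
  have := Phi_sub_Phi (a := a) (b := b)
  linarith

lemma Phi_continuous : Continuous Phi := by
  have hC : ∀ t : ℝ, ‖phi t‖ ≤ (Real.sqrt (2 * Real.pi))⁻¹ := by
    intro t
    have h1 : 0 < Real.sqrt (2 * Real.pi) := Real.sqrt_pos.2 (by positivity)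
    rw [Real.norm_eq_abs, abs_of_pos (phi_pos t), phi]
    have : Real.exp (-(t ^ 2) / 2) ≤ 1 := by
      rw [Real.exp_le_one_iff]
      nlinarith [sq_nonneg t]
    nlinarith [inv_pos.2 h1]
  have : LipschitzWith ((Real.sqrt (2 * Real.pi))⁻¹).toNNReal Phi := by
    apply LipschitzWith.of_dist_le_mul
    intro a b
    rw [Real.dist_eq, Real.dist_eq]
    have : Phi a - Phi b = ∫ t in b..a, phi t := Phi_sub_Phi
    rw [show |Phi a - Phi b| = |∫ t in b..a, phi t| by rw [this]]
    calc |∫ t in b..a, phi t| ≤ (Real.sqrt (2 * Real.pi))⁻¹ * |a - b| := by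
          have := intervalIntegral.norm_integral_le_of_norm_le_const
            (C := (Real.sqrt (2 * Real.pi))⁻¹) (f := phi) (a := b) (b := a)
            (fun x _ => hC x)
          simpa [Real.norm_eq_abs, abs_sub_comm] using this
      _ = ↑((Real.sqrt (2 * Real.pi))⁻¹).toNNReal * |a - b| := by
          rw [Real.coe_toNNReal _ (by positivity)]
  exact this.continuous

lemma Phi_tendsto_atTop : Tendsto Phi atTop (𝓝 1) := by
  have h := tendsto_setIntegral_of_monotone (s := fun z : ℝ => Iic z)
    (f := phi) (fun z => measurableSet_Iic) (fun a b hab => Iic_subset_Iic.2 hab)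
    (by rw [iUnion_Iic]; exact integrable_phi.integrableOn)
  rw [iUnion_Iic, setIntegral_univ, integral_phi] at h
  exact h

lemma Phi_tendsto_atBot : Tendsto Phi atBot (𝓝 0) := by
  have h := tendsto_setIntegral_of_antitone (s := fun z : ℝ => Iic (-z))
    (f := phi) (fun z => measurableSet_Iic)
    (fun a b hab => Iic_subset_Iic.2 (by linarith))
    (⟨0, integrable_phi.integrableOn⟩)
  have hempty : (⋂ z : ℝ, Iic (-z)) = (∅ : Set ℝ) := by
    ext x
    simp only [mem_iInter, mem_Iic, mem_empty_iff_false, iff_false, not_forall, not_le]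
    exact ⟨-(x - 1), by linarith⟩
  rw [hempty] at h
  simp only [Measure.restrict_empty, integral_zero_measure] at h
  have : Tendsto (fun z : ℝ => Phi (-z)) atTop (𝓝 0) := h
  have h2 := this.comp (tendsto_neg_atBot_atTop)
  have : ((fun z : ℝ => Phi (-z)) ∘ Neg.neg) = Phi := by ext x; simp
  rwa [this] at h2

lemma Phi_nonneg (z : ℝ) : 0 ≤ Phi z :=
  le_of_tendsto Phi_tendsto_atBot (eventually_atBot.2 ⟨z, fun w hw => Phi_strictMono.monotone hw⟩)

lemma Phi_pos (z : ℝ) : 0 < Phi z :=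
  lt_of_le_of_lt (Phi_nonneg (z - 1)) (Phi_strictMono (by linarith))

lemma Phi_le_one (z : ℝ) : Phi z ≤ 1 :=
  ge_of_tendsto Phi_tendsto_atTop (eventually_atTop.2 ⟨z, fun w hw => Phi_strictMono.monotone hw⟩)

lemma Phi_lt_one (z : ℝ) : Phi z < 1 :=
  lt_of_lt_of_le (Phi_strictMono (show z < z + 1 by linarith)) (Phi_le_one (z + 1))

lemma integral_Ioi_phi (z : ℝ) : ∫ t in Set.Ioi z, phi t = 1 - Phi z := by
  have h := intervalIntegral.integral_Iic_add_Ioi (b := z) (f := phi) (μ := volume)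
    integrable_phi.integrableOn integrable_phi.integrableOn
  rw [← Phi_eq, integral_phi] at h
  linarith

lemma Phi_surj {u : ℝ} (h0 : 0 < u) (h1 : u < 1) : ∃ z, Phi z = u := by
  obtain ⟨a, ha⟩ := (Phi_tendsto_atBot.eventually_lt_const h0).exists
  obtain ⟨b, hb⟩ := (Phi_tendsto_atTop.eventually_const_lt h1).exists
  have := intermediate_value_univ a b Phi_continuous
  exact this ⟨ha.le, hb.le⟩

lemma gaussian_Ioi (z : ℝ) : gaussianReal 0 1 (Set.Ioi z) = ENNReal.ofReal (1 - Phi z) := by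
  rw [gaussianReal_apply_eq_integral 0 one_ne_zero, ← phi_eq, integral_Ioi_phi]


lemma g_pos (z : ℝ) : 0 < g z := by
  have h1 : 0 < 1 - Phi z := by linarith [Phi_lt_one z]
  have h2 : 1 - Phi z < 1 := by linarith [Phi_pos z]
  have : 1 < (1 - Phi z)⁻¹ := (one_lt_inv₀ h1).2 h2
  simp only [g]; linarith

lemma g_measurable : Measurable g := by
  unfold g
  exact ((measurable_const.sub Phi_continuous.measurable).inv).sub measurable_const

/-- the superlevel set of `g` -/
lemma g_superlevel {c : ℝ} (hc : 0 < c) {zc : ℝ} (hzc : Phi zc = c / (1 + c)) (z : ℝ) :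
    c < g z ↔ zc < z := by
  have h1 : 0 < 1 - Phi z := by linarith [Phi_lt_one z]
  have h1c : (0:ℝ) < 1 + c := by linarith
  have : c < g z ↔ Phi zc < Phi z := by
    rw [g, hzc]
    rw [div_lt_iff₀ h1c]
    constructor
    · intro h
      have h2 : (1 + c) * (1 - Phi z) < 1 := by
        have : 1 + c < (1 - Phi z)⁻¹ := by linarith
        calc (1 + c) * (1 - Phi z) < (1 - Phi z)⁻¹ * (1 - Phi z) := by
              exact mul_lt_mul_of_pos_right this h1
          _ = 1 := inv_mul_cancel₀ h1.ne'
      nlinarith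
    · intro h
      have h2 : (1 + c) * (1 - Phi z) < 1 := by nlinarith
      have : 1 + c < (1 - Phi z)⁻¹ := by
        have h3 := mul_inv_cancel₀ h1.ne'
        have h4 : (0:ℝ) < (1 - Phi z)⁻¹ := inv_pos.2 h1
        nlinarith
      linarith
  rw [this, Phi_strictMono.lt_iff_lt]

lemma h_integrable {β : ℝ} (hβ0 : 0 < β) (hβ1 : β < 1) :
    IntegrableOn (fun s : ℝ => (1 + s ^ (1 / β))⁻¹) (Set.Ioi 0) := by
  have hβinv : (0:ℝ) ≤ 1 / β := by positivity
  have hcont : Continuous (fun s : ℝ => 1 + s ^ (1 / β)) :=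
    continuous_const.add (Real.continuous_rpow_const hβinv)
  have hmeas : Measurable (fun s : ℝ => (1 + s ^ (1 / β))⁻¹) := hcont.measurable.inv
  have h1 : IntegrableOn (fun s : ℝ => (1 + s ^ (1 / β))⁻¹) (Set.Ioc 0 1) := by
    refine Integrable.mono' (g := fun _ => (1:ℝ))
      (integrableOn_const measure_Ioc_lt_top.ne) hmeas.aestronglyMeasurable ?_
    · filter_upwards [ae_restrict_mem measurableSet_Ioc] with s hs
      have hs0 : (0:ℝ) ≤ s ^ (1/β) := Real.rpow_nonneg hs.1.le _
      rw [Real.norm_eq_abs, abs_of_pos (inv_pos.2 (by linarith))]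
      rw [inv_le_one_iff₀]
      right; linarith
  have h2 : IntegrableOn (fun s : ℝ => (1 + s ^ (1 / β))⁻¹) (Set.Ioi 1) := by
    have hint : IntegrableOn (fun s : ℝ => s ^ (-(1/β))) (Set.Ioi 1) := by
      apply integrableOn_Ioi_rpow_of_lt _ one_pos
      rw [neg_lt_neg_iff]
      rw [lt_div_iff₀ hβ0]
      linarith
    refine Integrable.mono' hint hmeas.aestronglyMeasurable ?_
    filter_upwards [ae_restrict_mem measurableSet_Ioi] with s hs
    have hs1 : (1:ℝ) < s := hs
    have hs0 : (0:ℝ) < s ^ (1/β) := Real.rpow_pos_of_pos (by linarith) _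
    rw [Real.norm_eq_abs, abs_of_pos (inv_pos.2 (by linarith))]
    rw [Real.rpow_neg (by linarith)]
    exact inv_anti₀ hs0 (by linarith)
  have := h1.union h2
  rwa [Set.Ioc_union_Ioi_eq_Ioi (by norm_num : (0:ℝ) ≤ 1)] at this

lemma real_beta {β : ℝ} (hβ0 : 0 < β) (hβ1 : β < 1) :
    ∫ u in Set.Ioo (0:ℝ) 1, u ^ (β - 1) * (1 - u) ^ (-β) = Real.pi / Real.sin (Real.pi * β) := by
  set J : ℝ := ∫ u in Set.Ioo (0:ℝ) 1, u ^ (β - 1) * (1 - u) ^ (-β) with hJ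
  have h2 : Complex.betaIntegral ↑β (1 - ↑β) = (J : ℂ) := by
    rw [Complex.betaIntegral, intervalIntegral.integral_of_le zero_le_one,
      integral_Ioc_eq_integral_Ioo, hJ]
    rw [setIntegral_congr_fun (g := fun u : ℝ => ((u ^ (β - 1) * (1 - u) ^ (-β) : ℝ) : ℂ))
      measurableSet_Ioo (fun x hx => ?_)]
    · exact integral_ofReal
    have hx0 : (0:ℝ) < x := hx.1
    have hx1 : x < 1 := hx.2
    have e1 : (x:ℂ) ^ ((β:ℂ) - 1) = ((x ^ (β - 1) : ℝ) : ℂ) := by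
      rw [show ((β:ℂ) - 1) = ((β - 1 : ℝ) : ℂ) by push_cast; ring]
      exact (Complex.ofReal_cpow hx0.le _).symm
    have e2 : (1 - (x:ℂ)) ^ ((1 - (β:ℂ)) - 1) = (((1 - x) ^ (-β) : ℝ) : ℂ) := by
      rw [show (1 - (x:ℂ)) = ((1 - x : ℝ) : ℂ) by push_cast; ring,
        show ((1 - (β:ℂ)) - 1) = ((-β : ℝ) : ℂ) by push_cast; ring]
      exact (Complex.ofReal_cpow (by linarith : (0:ℝ) ≤ 1 - x) _).symm
    rw [e1, e2]
    push_cast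
    ring
  have h1 := Complex.Gamma_mul_Gamma_eq_betaIntegral
    (s := (β:ℂ)) (t := 1 - (β:ℂ)) (by simpa using hβ0) (by simp; linarith)
  rw [show (β:ℂ) + (1 - (β:ℂ)) = 1 by ring, Complex.Gamma_one, one_mul, h2] at h1
  rw [show (1 - (β:ℂ)) = ((1 - β : ℝ) : ℂ) by push_cast; ring] at h1
  rw [Complex.Gamma_ofReal, Complex.Gamma_ofReal, ← Complex.ofReal_mul] at h1
  have hJ' : Real.Gamma β * Real.Gamma (1 - β) = J := Complex.ofReal_injective h1
  rw [← hJ', Real.Gamma_mul_Gamma_one_sub]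

lemma integral_h_eq {β : ℝ} (hβ0 : 0 < β) (hβ1 : β < 1) :
    ∫ s in Set.Ioi (0:ℝ), (1 + s ^ (1 / β))⁻¹ = Real.pi * β / Real.sin (Real.pi * β) := by
  set f : ℝ → ℝ := fun u => (u / (1 - u)) ^ β with hf
  have himg : f '' Set.Ioo 0 1 = Set.Ioi 0 := by
    apply Set.Subset.antisymm
    · rintro y ⟨u, hu, rfl⟩
      have h1u : 0 < 1 - u := by linarith [hu.2]
      exact Real.rpow_pos_of_pos (div_pos hu.1 h1u) _
    · intro y hy
      have hy0 : (0:ℝ) < y := hy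
      set c : ℝ := y ^ (1/β) with hc
      have hc0 : 0 < c := Real.rpow_pos_of_pos hy0 _
      refine ⟨c / (1 + c), ⟨div_pos hc0 (by linarith), ?_⟩, ?_⟩
      · rw [div_lt_one (by linarith)]; linarith
      · have h1 : 1 - c / (1 + c) = 1 / (1 + c) := by field_simp; ring
        have h2 : (c / (1 + c)) / (1 - c / (1 + c)) = c := by
          rw [h1]; field_simp
        simp only [hf, h2]
        rw [hc, one_div, Real.rpow_inv_rpow hy0.le hβ0.ne']
  have hder : ∀ u ∈ Set.Ioo (0:ℝ) 1, HasDerivWithinAt f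
      (β * (u / (1 - u)) ^ (β - 1) * ((1 * (1 - u) - u * (-1)) / (1 - u) ^ 2))
      (Set.Ioo 0 1) u := by
    intro u hu
    have h1u : 0 < 1 - u := by linarith [hu.2]
    have hq : 0 < u / (1 - u) := div_pos hu.1 h1u
    have hd : HasDerivAt (fun u : ℝ => u / (1 - u))
        ((1 * (1 - u) - u * (-1)) / (1 - u) ^ 2) u := by
      exact (hasDerivAt_id u).div ((hasDerivAt_id u).const_sub 1) h1u.ne'
    have h5 := (hd.rpow_const (p := β) (Or.inl hq.ne')).hasDerivWithinAt (s := Set.Ioo 0 1)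
    refine h5.congr_deriv ?_
    ring
  have hinj : Set.InjOn f (Set.Ioo 0 1) := by
    apply StrictMonoOn.injOn
    intro u hu v hv huv
    have h1u : 0 < 1 - u := by linarith [hu.2]
    have h1v : 0 < 1 - v := by linarith [hv.2]
    apply Real.rpow_lt_rpow (div_nonneg hu.1.le h1u.le) _ hβ0
    rw [div_lt_div_iff₀ h1u h1v]
    nlinarith [hu.1, hv.1]
  have key := integral_image_eq_integral_abs_deriv_smul measurableSet_Ioo hder hinj
    (fun s => (1 + s ^ (1 / β))⁻¹)
  rw [himg] at key
  rw [key]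
  have hcong : ∀ u ∈ Set.Ioo (0:ℝ) 1,
      |β * (u / (1 - u)) ^ (β - 1) * ((1 * (1 - u) - u * (-1)) / (1 - u) ^ 2)| •
        (1 + (f u) ^ (1 / β))⁻¹ = β * (u ^ (β - 1) * (1 - u) ^ (-β)) := by
    intro u hu
    have h1u : 0 < 1 - u := by linarith [hu.2]
    have hq : 0 < u / (1 - u) := div_pos hu.1 h1u
    have hfu : (f u) ^ (1/β) = u / (1 - u) := by
      simp only [hf]
      rw [one_div, ← Real.rpow_mul hq.le, mul_inv_cancel₀ hβ0.ne', Real.rpow_one]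
    have h3 : (1 + (f u) ^ (1/β))⁻¹ = 1 - u := by
      rw [hfu]
      rw [show 1 + u / (1 - u) = (1 - u)⁻¹ by field_simp; ring]
      rw [inv_inv]
    rw [h3, smul_eq_mul]
    have hpos : 0 < β * (u / (1 - u)) ^ (β - 1) * ((1 * (1 - u) - u * (-1)) / (1 - u) ^ 2) := by
      have : (0:ℝ) < (1 * (1 - u) - u * (-1)) / (1 - u) ^ 2 := by
        apply div_pos (by linarith) (by positivity)
      exact mul_pos (mul_pos hβ0 (Real.rpow_pos_of_pos hq _)) this
    rw [abs_of_pos hpos]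
    have hsplit : (u / (1 - u)) ^ (β - 1) = u ^ (β - 1) / (1 - u) ^ (β - 1) :=
      Real.div_rpow hu.1.le h1u.le _
    rw [hsplit]
    have hneg : (1 - u) ^ (-β) = ((1 - u) ^ (β - 1) * (1 - u))⁻¹ := by
      rw [← Real.rpow_add_one h1u.ne']
      rw [show β - 1 + 1 = β by ring, ← Real.rpow_neg h1u.le]
    rw [hneg]
    have hb1 : (0:ℝ) < (1 - u) ^ (β - 1) := Real.rpow_pos_of_pos h1u _
    field_simp
    ring
  rw [setIntegral_congr_fun measurableSet_Ioo hcong]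
  rw [integral_const_mul, real_beta hβ0 hβ1]
  field_simp

/-- If `Z` is standard normal and `β ∈ (0,1)`, then
`E[g(Z)^β] = ∫₀^∞ ds/(1 + s^{1/β}) = πβ/sin(πβ)`; in particular `g(Z)^β` is
integrable. -/
theorem moment_of_g_std_normal
    {Ω : Type*} [MeasurableSpace Ω] (P : Measure Ω) [IsProbabilityMeasure P]
    (Z : Ω → ℝ) (hZm : Measurable Z)
    (hZ : Measure.map Z P = gaussianReal 0 1)
    (β : ℝ) (hβ0 : 0 < β) (hβ1 : β < 1) :
    Integrable (fun ω => g (Z ω) ^ β) P ∧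
    (∫ ω, g (Z ω) ^ β ∂P) = (∫ s in Set.Ioi (0:ℝ), (1 + s ^ (1 / β))⁻¹) ∧
    (∫ ω, g (Z ω) ^ β ∂P) = Real.pi * β / Real.sin (Real.pi * β) := by
  have hnn : ∀ ω, 0 ≤ g (Z ω) ^ β := fun ω => Real.rpow_nonneg (g_pos _).le _
  have hmeas : Measurable fun ω => g (Z ω) ^ β :=
    ((Real.continuous_rpow_const hβ0.le).measurable.comp g_measurable).comp hZm
  have htail : ∀ t ∈ Set.Ioi (0:ℝ),
      P {ω | t < g (Z ω) ^ β} = ENNReal.ofReal ((1 + t ^ (1/β))⁻¹) := by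
    intro t ht
    have ht0 : (0:ℝ) < t := ht
    set c := t ^ (1/β) with hc
    have hc0 : 0 < c := Real.rpow_pos_of_pos ht0 _
    have h1c : (0:ℝ) < 1 + c := by linarith
    have hu0 : 0 < c / (1+c) := div_pos hc0 h1c
    have hu1 : c / (1+c) < 1 := by rw [div_lt_one h1c]; linarith
    obtain ⟨zc, hzc⟩ := Phi_surj hu0 hu1
    have hset : {ω | t < g (Z ω) ^ β} = Z ⁻¹' (Set.Ioi zc) := by
      ext ω
      simp only [Set.mem_setOf_eq, Set.mem_preimage, Set.mem_Ioi]
      rw [← g_superlevel hc0 hzc (Z ω), hc, one_div]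
      exact (Real.rpow_inv_lt_iff_of_pos ht0.le (g_pos _).le hβ0).symm
    rw [hset, ← Measure.map_apply hZm measurableSet_Ioi, hZ, gaussian_Ioi]
    congr 1
    rw [hzc]
    field_simp
    ring
  have hlayer := lintegral_eq_lintegral_meas_lt P (ae_of_all _ hnn) hmeas.aemeasurable
  have hlint : (∫⁻ t in Set.Ioi (0:ℝ), P {a | t < g (Z a) ^ β}) =
      ENNReal.ofReal (∫ s in Set.Ioi (0:ℝ), (1 + s ^ (1/β))⁻¹) := by
    rw [setLIntegral_congr_fun measurableSet_Ioi htail]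
    rw [← ofReal_integral_eq_lintegral_ofReal (h_integrable hβ0 hβ1) ?_]
    filter_upwards [ae_restrict_mem measurableSet_Ioi] with s hs
    have : (0:ℝ) ≤ s ^ (1/β) := Real.rpow_nonneg (le_of_lt hs) _
    positivity
  have hfin : (∫⁻ ω, ENNReal.ofReal (g (Z ω) ^ β) ∂P) =
      ENNReal.ofReal (∫ s in Set.Ioi (0:ℝ), (1 + s ^ (1/β))⁻¹) := hlayer.trans hlint
  have hint : Integrable (fun ω => g (Z ω) ^ β) P := by
    refine ⟨hmeas.aestronglyMeasurable, ?_⟩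
    rw [hasFiniteIntegral_iff_ofReal (ae_of_all _ hnn), hfin]
    exact ENNReal.ofReal_lt_top
  have hI_nonneg : 0 ≤ ∫ s in Set.Ioi (0:ℝ), (1 + s ^ (1/β))⁻¹ := by
    apply setIntegral_nonneg measurableSet_Ioi
    intro s hs
    have : (0:ℝ) ≤ s ^ (1/β) := Real.rpow_nonneg (le_of_lt hs) _
    positivity
  have hval : (∫ ω, g (Z ω) ^ β ∂P) = ∫ s in Set.Ioi (0:ℝ), (1 + s ^ (1/β))⁻¹ := by
    rw [integral_eq_lintegral_of_nonneg_ae (ae_of_all _ hnn) hmeas.aestronglyMeasurable, hfin,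
      ENNReal.toReal_ofReal hI_nonneg]
  exact ⟨hint, hval, hval.trans (integral_h_eq hβ0 hβ1)⟩
end
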